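/- Let m ≥ 1 be an integer, N = 2^m, and let M be the SAFFRON matrix. Then for every nonempty set S of column indices, the Hamming weight of the union ⋁_{j∈S} M_j equals m plus the number of bit positions i with 0 ≤ i < m for which there exist j, j' ∈ S with Nat.testBit j i ≠ Nat.testBit j' i. -/

import Mathlib

/-- The SAFFRON matrix for `N = 2 ^ m`: rows indexed by `Fin (2 * m)`, columns by
`Fin (2 ^ m)`; row `i < m` is the `i`-th bit of the column index, row `m ≤ i < 2m`
is the complement of the `(i - m)`-th bit. -/
def saffron (m : ℕ) (i : Fin (2 * m)) (j : Fin (2 ^ m)) : Bool :=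
  if (i : ℕ) < m then Nat.testBit (j : ℕ) (i : ℕ) else !Nat.testBit (j : ℕ) ((i : ℕ) - m)

/-- For every nonempty set `S` of columns of the SAFFRON matrix, the
Hamming weight of the union `⋁_{j ∈ S} M_j` is `m` plus the number of bit positions
`i < m` on which two members of `S` disagree. -/
theorem saffron_union_weight (m : ℕ) (hm : 1 ≤ m)
    (S : Finset (Fin (2 ^ m))) (hS : S.Nonempty) :
    (Finset.univ.filter (fun i : Fin (2 * m) => ∃ j ∈ S, saffron m i j = true)).card
      = m + ((Finset.range m).filter
          (fun i => ∃ j ∈ S, ∃ j' ∈ S,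
            Nat.testBit (j : ℕ) i ≠ Nat.testBit (j' : ℕ) i)).card := by
  classical
  set Q : ℕ → Prop := fun i =>
    ∃ j ∈ S, (if i < m then Nat.testBit (j : ℕ) i else !Nat.testBit (j : ℕ) (i - m)) = true
    with hQ
  set A : ℕ → Prop := fun i => ∃ j ∈ S, Nat.testBit (j : ℕ) i = true with hA
  set B : ℕ → Prop := fun i => ∃ j ∈ S, Nat.testBit (j : ℕ) i = false with hB
  have h1 : (Finset.univ.filter (fun i : Fin (2 * m) => ∃ j ∈ S, saffron m i j = true)).card
      = ((Finset.range (2 * m)).filter Q).card := by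
    apply Finset.card_bij (fun (i : Fin (2 * m)) _ => (i : ℕ))
    · intro a ha
      simp only [Finset.mem_filter, Finset.mem_univ, true_and] at ha
      simp only [Finset.mem_filter, Finset.mem_range, hQ]
      exact ⟨a.isLt, by simpa [saffron] using ha⟩
    · intro a _ b _ h; exact Fin.ext h
    · intro b hb
      simp only [Finset.mem_filter, Finset.mem_range, hQ] at hb
      exact ⟨⟨b, hb.1⟩, by
        simp only [Finset.mem_filter, Finset.mem_univ, true_and]
        simpa [saffron] using hb.2, rfl⟩
  -- split range (2*m) into [0,m) and [m,2m)
  have hsplit : (Finset.range (2 * m)).filter Q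
      = (Finset.range m).filter Q ∪ (Finset.Ico m (2 * m)).filter Q := by
    rw [← Finset.filter_union]
    congr 1
    rw [Finset.range_eq_Ico, Finset.range_eq_Ico]
    exact (Finset.Ico_union_Ico_eq_Ico (Nat.zero_le m) (by omega : m ≤ 2 * m)).symm
  have hdisj : Disjoint ((Finset.range m).filter Q) ((Finset.Ico m (2 * m)).filter Q) := by
    apply Finset.disjoint_filter_filter
    rw [Finset.range_eq_Ico]
    exact Finset.Ico_disjoint_Ico_consecutive 0 m (2 * m)
  have h2 : ((Finset.range m).filter Q) = (Finset.range m).filter A := by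
    apply Finset.filter_congr
    intro i hi
    simp only [Finset.mem_range] at hi
    simp [hQ, hA, hi]
  have h3 : ((Finset.Ico m (2 * m)).filter Q).card = ((Finset.range m).filter B).card := by
    apply Finset.card_bij (fun i _ => i - m)
    · intro a ha
      simp only [Finset.mem_filter, Finset.mem_Ico, hQ] at ha
      obtain ⟨⟨h1', h2'⟩, j, hj, hjt⟩ := ha
      rw [if_neg (by omega)] at hjt
      simp only [Finset.mem_filter, Finset.mem_range, hB]
      exact ⟨by omega, j, hj, by simpa using hjt⟩
    · intro a ha b hb h
      simp only [Finset.mem_filter, Finset.mem_Ico] at ha hb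
      omega
    · intro b hb
      simp only [Finset.mem_filter, Finset.mem_range, hB] at hb
      obtain ⟨hbm, j, hj, hjt⟩ := hb
      refine ⟨b + m, ?_, by omega⟩
      simp only [Finset.mem_filter, Finset.mem_Ico, hQ]
      refine ⟨⟨by omega, by omega⟩, j, hj, ?_⟩
      rw [if_neg (by omega)]
      simp [hjt]
  have h4 : ((Finset.range m).filter A).card + ((Finset.range m).filter B).card
      = m + ((Finset.range m).filter
          (fun i => ∃ j ∈ S, ∃ j' ∈ S,
            Nat.testBit (j : ℕ) i ≠ Nat.testBit (j' : ℕ) i)).card := by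
    rw [← Finset.card_union_add_card_inter, ← Finset.filter_or, ← Finset.filter_and]
    congr 1
    · have : (Finset.range m).filter (fun i => A i ∨ B i) = Finset.range m := by
        apply Finset.filter_true_of_mem
        intro i _
        obtain ⟨j, hj⟩ := hS
        cases h : Nat.testBit (j : ℕ) i
        · exact Or.inr ⟨j, hj, h⟩
        · exact Or.inl ⟨j, hj, h⟩
      rw [this, Finset.card_range]
    · congr 1
      apply Finset.filter_congr
      intro i _
      simp only [hA, hB]
      constructor
      · rintro ⟨⟨j, hj, hjt⟩, ⟨j', hj', hjt'⟩⟩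
        exact ⟨j, hj, j', hj', by simp [hjt, hjt']⟩
      · rintro ⟨j, hj, j', hj', hne⟩
        cases h : Nat.testBit (j : ℕ) i
        · refine ⟨⟨j', hj', ?_⟩, ⟨j, hj, h⟩⟩
          rw [h] at hne
          simpa using hne
        · refine ⟨⟨j, hj, h⟩, ⟨j', hj', ?_⟩⟩
          rw [h] at hne
          simpa using hne
  rw [h1, hsplit, Finset.card_union_of_disjoint hdisj, h2, h3, h4]
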